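/- Let A⁻¹ = a₁I₃ + ae₃e₃ᵀ with a₁ ∈ ℂ∖{0,−a}, a ∈ ℂ∖{0} (a quadric of revolution x₀ᵀAx₀ = 1), and write a point of the quadric as x₀ = √x e₁ + √y e₂ + √z e₃ with the graph condition z = z(x+y). Then the tangency/integrability condition x ∂ₓz + y ∂ᵧz − z = −a ∂ₓz/(1+∂ₓz) = −a ∂ᵧz/(1+∂ᵧz) forces ∂ₓz = ∂ᵧz, and if moreover ∂²ₓz = 0 then z(x+y) = c(1 + (x+y)/(a−c)) for some constant c ∈ ℂ∖{0,a}, i.e. x₀ lies on a quadric of the confocal family x_wᵀA(I₃ − wA)⁻¹x_w = 1. -/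

import Mathlib

/-- For the quadric of revolution with `A⁻¹ = a₁I₃ + ae₃e₃ᵀ`: (i) the
tangency/integrability condition
`x ∂ₓz + y ∂ᵧz − z = −a ∂ₓz/(1+∂ₓz) = −a ∂ᵧz/(1+∂ᵧz)` forces `∂ₓz = ∂ᵧz`
(so `z = z(x+y)`), and (ii) a function `z` of `s = x+y` satisfying
`s z' − z = −a z'/(1+z')` with `z'' = 0` is `z(s) = c(1 + s/(a−c))` for some constant
`c ∈ ℂ \ {0, a}` — i.e. the point lies on a quadric of the confocal family. -/
theorem revolution_confocal_characterization (a : ℂ) (ha : a ≠ 0) :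
    (∀ x y zv zx zy : ℂ, 1 + zx ≠ 0 → 1 + zy ≠ 0 →
      x * zx + y * zy - zv = -a * zx / (1 + zx) →
      x * zx + y * zy - zv = -a * zy / (1 + zy) → zx = zy) ∧
    (∀ z : ℂ → ℂ, Differentiable ℂ z →
      (∀ s, 1 + deriv z s ≠ 0) →
      (∀ s, s * deriv z s - z s = -a * deriv z s / (1 + deriv z s)) →
      (∀ s, deriv (deriv z) s = 0) →
      (∃ s, deriv z s ≠ 0) →
      ∃ c : ℂ, c ≠ 0 ∧ c ≠ a ∧ ∀ s, z s = c * (1 + s / (a - c))) := by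
  constructor
  · intro x y zv zx zy hx hy h1 h2
    have h := h1.symm.trans h2
    field_simp at h
    have h' : a * (zx - zy) = 0 := by linear_combination (-a) * h
    rcases mul_eq_zero.mp h' with h'' | h''
    · exact absurd h'' ha
    · exact sub_eq_zero.mp h''
  · rintro z hz hne hode hzz ⟨s₀, hs₀⟩
    -- deriv z is constant
    have hdg : Differentiable ℂ (deriv z) := by
      have h2 : ContDiff ℂ (⊤ : ℕ∞) z := hz.contDiff
      exact (contDiff_infty_iff_deriv.mp h2).2.differentiable (by norm_num)
    have hconst : ∀ s, deriv z s = deriv z 0 := by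
      intro s
      have hR : Differentiable ℝ (deriv z) := fun t => (hdg t).restrictScalars ℝ
      apply is_const_of_fderiv_eq_zero hR
      intro t
      have hC : fderiv ℂ (deriv z) t = 0 := by ext1; exact hzz t
      rw [(hdg t).fderiv_restrictScalars ℝ, hC]
      simp
    set m := deriv z 0 with hm
    have hm0 : m ≠ 0 := hconst s₀ ▸ hs₀
    have h1m : 1 + m ≠ 0 := by rw [hm]; exact hne 0
    refine ⟨a * m / (1 + m), ?_, ?_, ?_⟩
    · exact div_ne_zero (mul_ne_zero ha hm0) h1m
    · intro hc
      apply ha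
      field_simp at hc
      linear_combination (-a) * hc
    · intro s
      have h := hode s
      rw [hconst s] at h
      have hz : z s = s * m + a * m / (1 + m) := by linear_combination -h
      rw [hz, show a - a * m / (1 + m) = a / (1 + m) by field_simp; ring]
      rw [div_div_eq_mul_div]
      field_simp
      ring
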